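/- Fix μ < −ln 2 and set g_c = e^μ(1 − e^μ) ∈ (0, 1/4). Then there exist b with g_c < b < 1/4, a real number r ≠ 0, and a function h analytic on the open disc {g ∈ ℂ : |g| < b}, such that for every complex g with |g| < g_c the series Σ_{m=1}^∞ e^{−μm} Y_m(g) converges and equals r/(g_c − g) + h(g); in other words, the generating function W^{(μ)} extends analytically to {|g| < b} \ {g_c} and has a simple pole at g_c. -/

import Mathlib

open scoped Real BigOperators

/-- The generating functions `X_m` of rooted planar trees of height at most `m`:
`X_0 = 0`, `X_1(g) = g`, `X_m(g) = g/(1 - X_{m-1}(g))`. -/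
noncomputable def Xc : ℕ → ℂ → ℂ
  | 0, _ => 0
  | (m + 1), g => g / (1 - Xc m g)

/-- `Y_m(g) = ∏_{k=1}^m X_k(g)`, the generating function of one-sided trees of height `m`. -/
noncomputable def Yc (m : ℕ) (g : ℂ) : ℂ := ∏ k ∈ Finset.Icc 1 m, Xc k g

lemma pow_aux (t u gval : ℂ) (m : ℕ) (h1 : t + u = 1) (h2 : t*u = gval) :
    (u^(m+1) - t^(m+1)) - gval*(u^m - t^m) = u^(m+1+1) - t^(m+1+1) := by
  have hu : u = 1 - t := by linear_combination h1
  subst hu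
  rw [← h2]
  ring

noncomputable def sC (g : ℂ) : ℂ := (1 - 4*g) ^ ((1:ℂ)/2)
noncomputable def tC (g : ℂ) : ℂ := (1 - sC g)/2
noncomputable def uC (g : ℂ) : ℂ := (1 + sC g)/2

lemma wre_pos {g : ℂ} (hg : ‖g‖ < 1/4) : 0 < (1 - 4*g).re := by
  have h1 : |g.re| ≤ ‖g‖ := Complex.abs_re_le_norm g
  have : (1 - 4*g).re = 1 - 4*g.re := by simp
  rw [this]
  have := abs_le.mp h1
  nlinarith [this.1, this.2]

lemma wne {g : ℂ} (hg : ‖g‖ < 1/4) : (1 - 4*g) ≠ 0 := by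
  intro h
  have := wre_pos hg
  rw [h] at this
  simp at this

lemma sC_sq {g : ℂ} (hg : ‖g‖ < 1/4) : sC g ^ 2 = 1 - 4*g := by
  have hne := wne hg
  have h : sC g * sC g = (1 - 4*g) ^ ((1:ℂ)/2 + (1:ℂ)/2) := (Complex.cpow_add _ _ hne).symm
  rw [show ((1:ℂ)/2 + (1:ℂ)/2) = 1 by norm_num, Complex.cpow_one] at h
  rw [pow_two, h]

lemma sC_re_pos {g : ℂ} (hg : ‖g‖ < 1/4) : 0 < (sC g).re := by
  have hne := wne hg
  have harg : |Complex.arg (1 - 4*g)| < Real.pi/2 :=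
    Complex.abs_arg_lt_pi_div_two_iff.mpr (Or.inl (wre_pos hg))
  rw [sC, Complex.cpow_def_of_ne_zero hne, Complex.exp_re]
  have him : (Complex.log (1 - 4*g) * ((1:ℂ)/2)).im = Complex.arg (1 - 4*g) / 2 := by
    simp [Complex.mul_im, Complex.log_im]
    ring
  rw [him]
  have hpi := Real.pi_pos
  have habs := abs_lt.mp harg
  have hcos : 0 < Real.cos (Complex.arg (1 - 4*g) / 2) :=
    Real.cos_pos_of_mem_Ioo ⟨by linarith [habs.1], by linarith [habs.2]⟩
  positivity

lemma tu_add (g : ℂ) : tC g + uC g = 1 := by unfold tC uC; ring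

lemma tu_mul {g : ℂ} (hg : ‖g‖ < 1/4) : tC g * uC g = g := by
  have h := sC_sq hg
  unfold tC uC
  linear_combination (-1/4 : ℂ) * h

lemma abs_t_lt_abs_u {g : ℂ} (hg : ‖g‖ < 1/4) :
    ‖tC g‖ < ‖uC g‖ := by
  have h := sC_re_pos hg
  have ht : (‖tC g‖)^2 = Complex.normSq (tC g) := Complex.sq_norm _
  have hu : (‖uC g‖)^2 = Complex.normSq (uC g) := Complex.sq_norm _
  have hdiff : Complex.normSq (uC g) - Complex.normSq (tC g) = (sC g).re := by
    unfold tC uC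
    simp [Complex.normSq_apply, Complex.div_re, Complex.div_im, Complex.normSq]
    ring
  have habs : (‖tC g‖)^2 < (‖uC g‖)^2 := by
    rw [ht, hu]; linarith
  exact lt_of_pow_lt_pow_left₀ 2 (norm_nonneg _) habs

lemma uC_ne {g : ℂ} (hg : ‖g‖ < 1/4) : uC g ≠ 0 := by
  intro h
  have h2 := abs_t_lt_abs_u hg
  rw [h] at h2
  simp at h2
  exact absurd h2 (norm_nonneg _).not_gt

lemma D_ne {g : ℂ} (hg : ‖g‖ < 1/4) (n : ℕ) :
    uC g ^ (n+1) - tC g ^ (n+1) ≠ 0 := by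
  have h := abs_t_lt_abs_u hg
  have : ‖tC g ^ (n+1)‖ < ‖uC g ^ (n+1)‖ := by
    rw [norm_pow, norm_pow]
    exact pow_lt_pow_left₀ h (norm_nonneg _) (Nat.succ_ne_zero n)
  intro hc
  rw [sub_eq_zero] at hc
  rw [hc] at this
  exact lt_irrefl _ this

lemma sC_re_ge {g : ℂ} (hg : ‖g‖ < 1/4) :
    Real.sqrt (1 - 4*‖g‖) ≤ (sC g).re := by
  have hsq := sC_sq hg
  have hre : (1 - 4*g).re = 1 - 4*g.re := by simp
  -- (sC g)^2 re = re^2 - im^2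
  have h2 : ((sC g)^2).re = (sC g).re^2 - (sC g).im^2 := by
    rw [pow_two, Complex.mul_re]; ring
  have hge : 1 - 4*‖g‖ ≤ (sC g).re^2 := by
    have h3 : (1 - 4*g).re = (sC g).re^2 - (sC g).im^2 := by rw [← hsq, h2]
    have h4 : g.re ≤ ‖g‖ := Complex.re_le_norm g
    nlinarith [sq_nonneg (sC g).im]
  calc Real.sqrt (1 - 4*‖g‖) ≤ Real.sqrt ((sC g).re^2) := Real.sqrt_le_sqrt hge
    _ = |(sC g).re| := by rw [Real.sqrt_sq_eq_abs]
    _ = (sC g).re := abs_of_pos (sC_re_pos hg)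

lemma uC_lower {g : ℂ} {B : ℝ} (hB : B < 1/4) (hg : ‖g‖ ≤ B) :
    (1 + Real.sqrt (1 - 4*B))/2 ≤ ‖uC g‖ := by
  have hg4 : ‖g‖ < 1/4 := lt_of_le_of_lt hg hB
  have h1 : Real.sqrt (1 - 4*B) ≤ Real.sqrt (1 - 4*‖g‖) :=
    Real.sqrt_le_sqrt (by linarith)
  have h2 := sC_re_ge hg4
  have h3 : (uC g).re = (1 + (sC g).re)/2 := by unfold uC; simp
  calc (1 + Real.sqrt (1 - 4*B))/2 ≤ (uC g).re := by rw [h3]; linarith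
    _ ≤ ‖uC g‖ := Complex.re_le_norm _

lemma tC_bound {g : ℂ} {B : ℝ} (hB : B < 1/4) (hg : ‖g‖ ≤ B) :
    ‖tC g‖ ≤ 2*B/(1 + Real.sqrt (1 - 4*B)) := by
  have hg4 : ‖g‖ < 1/4 := lt_of_le_of_lt hg hB
  have hu := uC_lower hB hg
  have hune := uC_ne hg4
  have hsnn : 0 ≤ Real.sqrt (1 - 4*B) := Real.sqrt_nonneg _
  have ht : tC g = g / uC g := by
    field_simp
    linear_combination tu_mul hg4
  rw [ht, norm_div]
  have hupos : 0 < ‖uC g‖ := lt_of_lt_of_le (by positivity) hu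
  rw [div_le_div_iff₀ hupos (by positivity)]
  have h5 : ‖g‖ * 2 ≤ 2 * B := by linarith
  calc ‖g‖ * (1 + Real.sqrt (1 - 4*B))
      = ((1 + Real.sqrt (1 - 4*B))/2) * (‖g‖ * 2) := by ring
    _ ≤ ‖uC g‖ * (2*B) := by
        apply mul_le_mul hu h5 (by positivity) (norm_nonneg _)
    _ = 2*B * ‖uC g‖ := by ring

lemma Xc_eq {g : ℂ} (hg : ‖g‖ < 1/4) :
    ∀ m : ℕ, Xc m g = g * (uC g ^ m - tC g ^ m) / (uC g ^ (m+1) - tC g ^ (m+1)) := by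
  intro m
  induction m with
  | zero => simp [Xc]
  | succ m ih =>
    have hD := D_ne hg m
    have hD' := D_ne hg (m+1)
    have htu := tu_add g
    have hprod := tu_mul hg
    rw [show Xc (m+1) g = g / (1 - Xc m g) from rfl, ih]
    have key : 1 - g * (uC g ^ m - tC g ^ m) / (uC g ^ (m+1) - tC g ^ (m+1))
        = (uC g ^ (m+1+1) - tC g ^ (m+1+1)) / (uC g ^ (m+1) - tC g ^ (m+1)) := by
      rw [eq_div_iff hD, sub_mul, one_mul, div_mul_cancel₀ _ hD]
      exact pow_aux (tC g) (uC g) g m htu hprod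
    rw [key, div_div_eq_mul_div]

lemma Yc_eq {g : ℂ} (hg : ‖g‖ < 1/4) :
    ∀ m : ℕ, Yc m g = g ^ m * (uC g - tC g) / (uC g ^ (m+1) - tC g ^ (m+1)) := by
  intro m
  induction m with
  | zero =>
    simp [Yc]
    rw [div_self]
    have := D_ne hg 0
    simpa using this
  | succ m ih =>
    have hD := D_ne hg m
    have hD' := D_ne hg (m+1)
    have h1 : Yc (m+1) g = Yc m g * Xc (m+1) g := by
      unfold Yc
      exact Finset.prod_Icc_succ_top (Nat.le_add_left 1 m) _
    rw [h1, ih, Xc_eq hg (m+1)]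
    field_simp
    ring

noncomputable def cF (a : ℂ) (n : ℕ) (g : ℂ) : ℂ :=
  (uC g - tC g) * tC g ^ (2*n+1) / (a ^ n * uC g * (uC g ^ (n+1) - tC g ^ (n+1)))

lemma term_decomp {g : ℂ} (hg : ‖g‖ < 1/4) {a : ℂ} (ha : a ≠ 0) (n : ℕ) :
    (a⁻¹) ^ n * Yc n g
      = (uC g - tC g)/uC g * (tC g / a) ^ n + cF a n g := by
  have hD := D_ne hg n
  have hu := uC_ne hg
  have hprod := tu_mul hg
  have han : a ^ n ≠ 0 := pow_ne_zero _ ha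
  have hden : a ^ n * uC g * (uC g ^ (n+1) - tC g ^ (n+1)) ≠ 0 :=
    mul_ne_zero (mul_ne_zero han hu) hD
  have hgn : g ^ n = tC g ^ n * uC g ^ n := by rw [← mul_pow, hprod]
  rw [Yc_eq hg n, cF, hgn, div_pow, div_mul_div_comm,
    div_add_div _ _ (mul_ne_zero hu han) hden,
    eq_div_iff (mul_ne_zero (mul_ne_zero hu han) hden), inv_pow]
  field_simp [hD]
  ring

noncomputable def h1F (a : ℝ) (g : ℂ) : ℂ :=
  -((1-2*(a:ℂ))^2 + (-3+7*(a:ℂ)-4*(a:ℂ)^2)*tC g + 2*(1-(a:ℂ))*tC g^2) /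
    ((1 - tC g)*(1-(a:ℂ))*(1-(a:ℂ) - tC g))

lemma tC_lt_half {g : ℂ} (hg : ‖g‖ < 1/4) : ‖tC g‖ < 1/2 := by
  have h := tC_bound hg (le_refl (‖g‖))
  have hs : 0 ≤ Real.sqrt (1 - 4*‖g‖) := Real.sqrt_nonneg _
  have h2 : 2*‖g‖/(1 + Real.sqrt (1 - 4*‖g‖)) ≤ 2*‖g‖ := by
    apply div_le_self (by positivity) (by linarith)
  calc ‖tC g‖ ≤ _ := h
    _ ≤ 2*‖g‖ := h2
    _ < 1/2 := by linarith

lemma geo_closed {a : ℝ} {g : ℂ} (ha0 : 0 < a) (ha2 : a < 1/2)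
    (hg4 : ‖g‖ < 1/4) (hta : ‖tC g‖ < a) :
    (uC g - tC g)/uC g * ((tC g/(a:ℂ)) * (1 - tC g/(a:ℂ))⁻¹)
      = ((a*(1-2*a)^2/(1-a) : ℝ) : ℂ)/(((a*(1-a) : ℝ) : ℂ) - g) + h1F a g := by
  have htu := tu_add g
  have hprod := tu_mul hg4
  have hthalf := tC_lt_half hg4
  have haC : ((a:ℂ)) ≠ 0 := Complex.ofReal_ne_zero.mpr (ne_of_gt ha0)
  have habs1a : ‖(1:ℂ) - (a:ℂ)‖ = 1 - a := by
    rw [show (1:ℂ) - (a:ℂ) = ((1 - a : ℝ) : ℂ) by push_cast; ring,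
      Complex.norm_real, Real.norm_eq_abs, abs_of_pos (by linarith)]
  rw [h1F]
  set t := tC g with hts
  set u := uC g with hus
  have hat : (a:ℂ) - t ≠ 0 := by
    intro h
    have h2 : (a:ℂ) = t := sub_eq_zero.mp h
    rw [← h2, Complex.norm_real, Real.norm_eq_abs, abs_of_pos ha0] at hta
    exact lt_irrefl _ hta
  have h1at : (1:ℂ) - (a:ℂ) - t ≠ 0 := by
    intro h
    have h2 : (1:ℂ) - (a:ℂ) = t := sub_eq_zero.mp h
    rw [h2] at habs1a
    linarith
  have h1a : (1:ℂ) - (a:ℂ) ≠ 0 := by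
    intro h
    rw [h] at habs1a
    simp at habs1a
    linarith
  have hut : (1:ℂ) - t ≠ 0 := by
    intro h
    have h2 : (1:ℂ) = t := sub_eq_zero.mp h
    have : ‖t‖ = 1 := by rw [← h2]; simp
    linarith
  have hu1 : u = 1 - t := by linear_combination htu
  have hu : u ≠ 0 := by rw [hu1]; exact hut
  have hgt : g = t * (1 - t) := by rw [← hu1]; linear_combination -hprod
  have hta' : (1:ℂ) - t/(a:ℂ) ≠ 0 := by
    intro h
    field_simp at h
    exact hat (h.trans (mul_zero _))
  have hfact : (((a*(1-a) : ℝ) : ℂ)) - g = ((a:ℂ) - t)*(1 - (a:ℂ) - t) := by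
    push_cast
    linear_combination -hgt
  rw [hfact, hu1]
  push_cast
  field_simp
  ring

lemma cF_bound {a T U : ℝ} {g : ℂ} (hg4 : ‖g‖ < 1/4)
    (ha0 : 0 < a) (hU0 : 0 < U) (hT0 : 0 ≤ T) (hTU : T < U)
    (hT : ‖tC g‖ ≤ T) (hU : U ≤ ‖uC g‖) (n : ℕ) :
    ‖cF (a:ℂ) n g‖ ≤ (2*T/(U*(U-T))) * (T^2/(a*U))^n := by
  have hs : uC g - tC g = sC g := by unfold uC tC; ring
  have hsb : ‖sC g‖ ≤ 2 := by
    have h1 : (‖sC g‖)^2 = ‖1 - 4*g‖ := by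
      rw [← norm_pow, sC_sq hg4]
    have h2 : ‖1 - 4*g‖ ≤ 1 + 4*‖g‖ := by
      simpa using norm_sub_le (1:ℂ) (4*g)
    nlinarith [norm_nonneg (sC g)]
  have hUT0 : (0:ℝ) < U - T := by linarith
  have hDlow : U^n*(U-T) ≤ ‖uC g ^ (n+1) - tC g ^ (n+1)‖ := by
    have h1 : ‖uC g‖^(n+1) - ‖tC g‖^(n+1)
        ≤ ‖uC g ^ (n+1) - tC g ^ (n+1)‖ := by
      simpa [norm_pow] using norm_sub_norm_le (uC g^(n+1)) (tC g^(n+1))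
    have h2 : T^(n+1) ≤ T*U^n := by
      have h5 : T^n ≤ U^n := pow_le_pow_left₀ hT0 hTU.le n
      calc T^(n+1) = T * T^n := by ring
        _ ≤ T * U^n := mul_le_mul_of_nonneg_left h5 hT0
    have h3 : U^(n+1) ≤ ‖uC g‖^(n+1) := pow_le_pow_left₀ hU0.le hU _
    have h4 : ‖tC g‖^(n+1) ≤ T^(n+1) :=
      pow_le_pow_left₀ (norm_nonneg _) hT _
    have e1 : U^n*(U-T) = U^(n+1) - T*U^n := by ring
    linarith
  have habs : ‖cF (a:ℂ) n g‖
      = ‖sC g‖ * ‖tC g‖^(2*n+1)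
        / (a^n * ‖uC g‖ * ‖uC g ^ (n+1) - tC g ^ (n+1)‖) := by
    rw [cF, hs, norm_div, norm_mul, norm_pow, norm_mul, norm_mul, norm_pow,
      Complex.norm_real, Real.norm_eq_abs, abs_of_pos ha0]
  rw [habs]
  have hdenpos : (0:ℝ) < a^n * U * (U^n*(U-T)) :=
    mul_pos (mul_pos (pow_pos ha0 n) hU0) (mul_pos (pow_pos hU0 n) hUT0)
  have hnum : ‖sC g‖ * ‖tC g‖^(2*n+1) ≤ 2 * T^(2*n+1) :=
    mul_le_mul hsb (pow_le_pow_left₀ (norm_nonneg _) hT _) (by positivity)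
      (by norm_num)
  have hden : a^n * U * (U^n*(U-T))
      ≤ a^n * ‖uC g‖ * ‖uC g ^ (n+1) - tC g ^ (n+1)‖ := by
    have e2 : a^n * U ≤ a^n * ‖uC g‖ :=
      mul_le_mul_of_nonneg_left hU (pow_nonneg ha0.le n)
    exact mul_le_mul e2 hDlow (mul_pos (pow_pos hU0 n) hUT0).le
      (mul_nonneg (pow_nonneg ha0.le n) (norm_nonneg _))
  have step1 : ‖sC g‖ * ‖tC g‖^(2*n+1)
        / (a^n * ‖uC g‖ * ‖uC g ^ (n+1) - tC g ^ (n+1)‖)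
      ≤ 2 * T^(2*n+1) / (a^n * U * (U^n*(U-T))) :=
    div_le_div₀ (mul_nonneg (by norm_num) (pow_nonneg hT0 _)) hnum hdenpos hden
  refine step1.trans (le_of_eq ?_)
  have hUT : U - T ≠ 0 := ne_of_gt hUT0
  have ha' : a ≠ 0 := ha0.ne'
  have hU' : U ≠ 0 := hU0.ne'
  rw [div_pow, mul_pow]
  field_simp
  ring

lemma sC_analytic : AnalyticOnNhd ℂ sC (Metric.ball (0:ℂ) (1/4)) := by
  intro g hg
  rw [Metric.mem_ball, dist_zero_right] at hg
  have hbase : AnalyticAt ℂ (fun z : ℂ => 1 - 4*z) g :=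
    analyticAt_const.sub (analyticAt_const.mul analyticAt_id)
  have hmem : (1 - 4*g) ∈ Complex.slitPlane :=
    Complex.mem_slitPlane_iff.mpr (Or.inl (wre_pos hg))
  exact hbase.cpow analyticAt_const hmem

lemma tC_analytic : AnalyticOnNhd ℂ tC (Metric.ball (0:ℂ) (1/4)) := by
  intro g hg
  exact ((analyticAt_const.sub (sC_analytic g hg)).div analyticAt_const two_ne_zero)

lemma uC_analytic : AnalyticOnNhd ℂ uC (Metric.ball (0:ℂ) (1/4)) := by
  intro g hg
  exact ((analyticAt_const.add (sC_analytic g hg)).div analyticAt_const two_ne_zero)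

lemma mem_ball_quarter {g : ℂ} (hg : g ∈ Metric.ball (0:ℂ) (1/4)) :
    ‖g‖ < 1/4 := by
  rwa [Metric.mem_ball, dist_zero_right] at hg

lemma cF_analytic (a : ℝ) (ha0 : 0 < a) (n : ℕ) :
    AnalyticOnNhd ℂ (cF (a:ℂ) n) (Metric.ball (0:ℂ) (1/4)) := by
  intro g hg
  have hg4 := mem_ball_quarter hg
  have haC : ((a:ℂ)) ≠ 0 := Complex.ofReal_ne_zero.mpr (ne_of_gt ha0)
  have ht := tC_analytic g hg
  have hu := uC_analytic g hg
  apply AnalyticAt.div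
  · exact (hu.sub ht).mul (ht.pow _)
  · exact ((analyticAt_const.pow _).mul hu).mul ((hu.pow _).sub (ht.pow _))
  · exact mul_ne_zero (mul_ne_zero (pow_ne_zero _ haC) (uC_ne hg4)) (D_ne hg4 n)

lemma h1F_analytic (a : ℝ) (ha0 : 0 < a) (ha2 : a < 1/2) :
    AnalyticOnNhd ℂ (h1F a) (Metric.ball (0:ℂ) (1/4)) := by
  intro g hg
  have hg4 := mem_ball_quarter hg
  have hthalf := tC_lt_half hg4
  have ht := tC_analytic g hg
  have habs1a : ‖(1:ℂ) - (a:ℂ)‖ = 1 - a := by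
    rw [show (1:ℂ) - (a:ℂ) = ((1 - a : ℝ) : ℂ) by push_cast; ring,
      Complex.norm_real, Real.norm_eq_abs, abs_of_pos (by linarith)]
  have hut : (1:ℂ) - tC g ≠ 0 := by
    intro h
    have h2 : (1:ℂ) = tC g := sub_eq_zero.mp h
    have : ‖tC g‖ = 1 := by rw [← h2]; simp
    linarith
  have h1a : (1:ℂ) - (a:ℂ) ≠ 0 := by
    intro h
    rw [h] at habs1a
    simp at habs1a
    linarith
  have h1at : (1:ℂ) - (a:ℂ) - tC g ≠ 0 := by
    intro h
    have h2 : (1:ℂ) - (a:ℂ) = tC g := sub_eq_zero.mp h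
    rw [h2] at habs1a
    linarith
  apply AnalyticAt.div
  · exact ((analyticAt_const.add (analyticAt_const.mul ht)).add
      (analyticAt_const.mul (ht.pow 2))).neg
  · exact ((analyticAt_const.sub ht).mul analyticAt_const).mul
      (analyticAt_const.sub ht)
  · exact mul_ne_zero (mul_ne_zero hut h1a) h1at

set_option maxHeartbeats 1000000 in
/-- For `μ < −ln 2` and `g_c = e^μ(1−e^μ)`, there exist `b ∈ (g_c, 1/4)`, a real `r ≠ 0` and a
function `h` analytic on `{|g| < b}` such that for `|g| < g_c` the series
`W^{(μ)}(g) = Σ_{m≥1} e^{−μm} Y_m(g)` converges to `r/(g_c − g) + h(g)`; thus `W^{(μ)}`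
extends analytically to `{|g| < b} \ {g_c}` with a simple pole at `g_c`. -/
theorem W_simple_pole (μ : ℝ) (hμ : μ < -Real.log 2)
    (gc : ℝ) (hgc : gc = Real.exp μ * (1 - Real.exp μ)) :
    ∃ b : ℝ, gc < b ∧ b < 1 / 4 ∧
      ∃ r : ℝ, r ≠ 0 ∧
        ∃ h : ℂ → ℂ, AnalyticOnNhd ℂ h (Metric.ball (0 : ℂ) b) ∧
          ∀ g : ℂ, ‖g‖ < gc →
            HasSum (fun m : ℕ => (Real.exp (-μ * (m + 1)) : ℂ) * Yc (m + 1) g)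
              ((r : ℂ) / ((gc : ℂ) - g) + h g) := by
  set a := Real.exp μ with ha
  have ha0 : 0 < a := Real.exp_pos μ
  have ha2 : a < 1/2 := by
    rw [ha]
    calc Real.exp μ < Real.exp (-Real.log 2) := Real.exp_lt_exp.mpr hμ
      _ = 1/2 := by rw [Real.exp_neg, Real.exp_log two_pos]; norm_num
  have hgc' : gc = a*(1-a) := by rw [hgc]
  have hgc0 : 0 < gc := by rw [hgc']; nlinarith
  have hgc4 : gc < 1/4 := by rw [hgc']; nlinarith
  have hsq_gc : Real.sqrt (1-4*gc) = 1-2*a := by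
    rw [hgc', show 1-4*(a*(1-a)) = (1-2*a)^2 by ring, Real.sqrt_sq (by linarith)]
  -- continuity data
  have hcont_sqrt : ContinuousAt (fun x : ℝ => Real.sqrt (1-4*x)) gc :=
    (Real.continuous_sqrt.comp (continuous_const.sub (continuous_const.mul
      continuous_id))).continuousAt
  have hcontU : ContinuousAt (fun x : ℝ => (1 + Real.sqrt (1-4*x))/2) gc :=
    ((continuousAt_const.add hcont_sqrt).div continuousAt_const two_ne_zero)
  have hcontT : ContinuousAt (fun x : ℝ => 2*x/(1 + Real.sqrt (1-4*x))) gc := by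
    apply ContinuousAt.div (continuousAt_const.mul continuousAt_id)
      (continuousAt_const.add hcont_sqrt)
    show 1 + Real.sqrt (1-4*gc) ≠ 0
    rw [hsq_gc]
    intro hcc
    linarith
  have hUgc : (1 + Real.sqrt (1-4*gc))/2 = 1-a := by rw [hsq_gc]; ring
  have hTgc : 2*gc/(1 + Real.sqrt (1-4*gc)) = a := by
    rw [hsq_gc, hgc', show (1:ℝ)+(1-2*a) = 2*(1-a) from by ring,
      div_eq_iff (by intro hcc; nlinarith : (2:ℝ)*(1-a) ≠ 0)]
    ring
  -- choose b via eventual strict inequalities near gc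
  have E1 : ∀ᶠ x in nhds gc, 2*x/(1 + Real.sqrt (1-4*x)) < (1 + Real.sqrt (1-4*x))/2 := by
    apply ContinuousAt.eventually_lt hcontT hcontU
    rw [hTgc, hUgc]; linarith
  have E2 : ∀ᶠ x in nhds gc,
      (2*x/(1 + Real.sqrt (1-4*x)))^2 < a * ((1 + Real.sqrt (1-4*x))/2) := by
    apply ContinuousAt.eventually_lt (hcontT.pow 2) (continuousAt_const.mul hcontU)
    show (2*gc/(1 + Real.sqrt (1-4*gc)))^2 < a * ((1 + Real.sqrt (1-4*gc))/2)
    rw [hTgc, hUgc]; nlinarith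
  have E3 : ∀ᶠ x in nhds gc, x < 1/4 := eventually_lt_nhds hgc4
  have E4 : ∀ᶠ x in nhds gc, 0 < 2*x/(1 + Real.sqrt (1-4*x)) := by
    apply ContinuousAt.eventually_lt continuousAt_const hcontT
    rw [hTgc]; exact ha0
  have Eall := ((E1.and E2).and (E3.and E4)).filter_mono
    (nhdsWithin_le_nhds (s := Set.Ioi gc))
  obtain ⟨b, ⟨⟨hE1, hE2⟩, hE3, hE4⟩, hb_mem⟩ :=
    (Eall.and eventually_mem_nhdsWithin).exists
  have hbgc : gc < b := hb_mem
  have hb4 : b < 1/4 := hE3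
  have hb0 : 0 < b := lt_trans hgc0 hbgc
  set T : ℝ := 2*b/(1 + Real.sqrt (1-4*b)) with hT_def
  set U : ℝ := (1 + Real.sqrt (1-4*b))/2 with hU_def
  have hTU : T < U := hE1
  have hT0 : 0 < T := hE4
  have hU0 : 0 < U := lt_trans hT0 hTU
  have hrhonum : T^2 < a*U := hE2
  set ρ : ℝ := T^2/(a*U) with hρ_def
  have hρ0 : 0 ≤ ρ := by positivity
  have hρ1 : ρ < 1 := (div_lt_one (by positivity)).mpr hrhonum
  set C : ℝ := 2*T/(U*(U-T)) with hC_def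
  set r : ℝ := a*(1-2*a)^2/(1-a) with hr_def
  have hr : r ≠ 0 := by
    have : 0 < r := by
      apply div_pos
      · nlinarith
      · linarith
    exact ne_of_gt this
  have haC : ((a:ℂ)) ≠ 0 := Complex.ofReal_ne_zero.mpr (ne_of_gt ha0)
  set tail : ℂ → ℂ := fun g => ∑' m : ℕ, cF (a:ℂ) (m+1) g with htail_def
  have hsub : Metric.ball (0:ℂ) b ⊆ Metric.ball (0:ℂ) (1/4) :=
    Metric.ball_subset_ball (le_of_lt hb4)
  -- uniform bound on the ball of radius b
  have hbound : ∀ (m : ℕ) (g : ℂ), g ∈ Metric.ball (0:ℂ) b →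
      ‖cF (a:ℂ) (m+1) g‖ ≤ C*ρ^(m+1) := by
    intro m g hgmem
    have hgb : ‖g‖ < b := by
      rwa [Metric.mem_ball, dist_zero_right] at hgmem
    have hg4 : ‖g‖ < 1/4 := lt_trans hgb hb4
    have hTb : ‖tC g‖ ≤ T := by
      have h1 := tC_bound hb4 (le_of_lt hgb)
      exact h1
    have hUb : U ≤ ‖uC g‖ := uC_lower hb4 (le_of_lt hgb)
    have := cF_bound hg4 ha0 hU0 hT0.le hTU hTb hUb (m+1)
    exact this
  have hsumu : Summable (fun m : ℕ => C*ρ^(m+1)) := by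
    have h1 : Summable (fun m : ℕ => ρ^m) := summable_geometric_of_lt_one hρ0 hρ1
    have h2 : Summable (fun m : ℕ => (C*ρ)*ρ^m) := h1.mul_left _
    apply h2.congr
    intro m
    ring
  -- analyticity of tail
  have htail_anal : AnalyticOnNhd ℂ tail (Metric.ball (0:ℂ) b) := by
    have htuo : TendstoUniformlyOn
        (fun N => fun g => ∑ m ∈ Finset.range N, cF (a:ℂ) (m+1) g)
        tail Filter.atTop (Metric.ball (0:ℂ) b) :=
      tendstoUniformlyOn_tsum_nat hsumu hbound
    have hdiff : DifferentiableOn ℂ tail (Metric.ball (0:ℂ) b) := by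
      apply htuo.tendstoLocallyUniformlyOn.differentiableOn
      · filter_upwards with N
        apply DifferentiableOn.fun_sum
        intro i _
        exact ((cF_analytic a ha0 (i+1)).differentiableOn).mono hsub
      · exact Metric.isOpen_ball
    exact hdiff.analyticOnNhd Metric.isOpen_ball
  set h : ℂ → ℂ := fun g => h1F a g + tail g with hh_def
  have hh_anal : AnalyticOnNhd ℂ h (Metric.ball (0:ℂ) b) :=
    AnalyticOnNhd.add (((h1F_analytic a ha0 ha2)).mono hsub) htail_anal
  refine ⟨b, hbgc, hb4, r, hr, h, hh_anal, ?_⟩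
  intro g habs
  have hg4 : ‖g‖ < 1/4 := lt_trans habs hgc4
  have hgb : ‖g‖ < b := lt_trans habs hbgc
  -- |t| < a
  have hta : ‖tC g‖ < a := by
    have h1 := tC_bound hg4 (le_refl (‖g‖))
    have hs2 : 1-2*a < Real.sqrt (1-4*‖g‖) := by
      rw [← hsq_gc]
      exact Real.sqrt_lt_sqrt (by nlinarith) (by linarith)
    have hden : (0:ℝ) < 1 + Real.sqrt (1-4*‖g‖) := by linarith
    have h2 : 2*‖g‖/(1 + Real.sqrt (1-4*‖g‖)) < a := by
      rw [div_lt_iff₀ hden]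
      have h3 := mul_lt_mul_of_pos_left hs2 ha0
      have h4 : ‖g‖ < a*(1-a) := by rw [← hgc']; exact habs
      linarith
    linarith
  -- decomposition of each term
  have hterm : ∀ m : ℕ, (Real.exp (-μ * (m + 1)) : ℂ) * Yc (m + 1) g
      = (uC g - tC g)/uC g * (tC g/(a:ℂ))^(m+1) + cF (a:ℂ) (m+1) g := by
    intro m
    have hexp : (Real.exp (-μ * (m + 1)) : ℂ) = ((a:ℂ)⁻¹)^(m+1) := by
      rw [show -μ * ((m:ℝ) + 1) = ((m+1 : ℕ):ℝ)*(-μ) from by push_cast; ring,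
        Real.exp_nat_mul, Real.exp_neg, ha]
      push_cast
      ring
    rw [hexp]
    exact term_decomp hg4 haC (m+1)
  -- geometric part
  have hβ : ‖tC g/(a:ℂ)‖ < 1 := by
    rw [norm_div, Complex.norm_real, Real.norm_eq_abs, abs_of_pos ha0]
    rw [div_lt_one ha0]
    exact hta
  have hgeo0 := hasSum_geometric_of_norm_lt_one hβ
  have hgeo1 := (hgeo0.mul_right (tC g/(a:ℂ))).mul_left ((uC g - tC g)/uC g)
  have hgeo : HasSum (fun m : ℕ => (uC g - tC g)/uC g * (tC g/(a:ℂ))^(m+1))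
      ((uC g - tC g)/uC g * ((tC g/(a:ℂ)) * (1 - tC g/(a:ℂ))⁻¹)) := by
    have heq : (fun m : ℕ => (uC g - tC g)/uC g * ((tC g/(a:ℂ))^m * (tC g/(a:ℂ))))
        = fun m : ℕ => (uC g - tC g)/uC g * (tC g/(a:ℂ))^(m+1) := by
      funext m
      rw [← pow_succ]
    rw [← heq]
    rw [mul_comm (tC g/(a:ℂ)) (1 - tC g/(a:ℂ))⁻¹]
    exact hgeo1
  -- tail part
  have hcsum : Summable (fun m : ℕ => cF (a:ℂ) (m+1) g) := by
    apply Summable.of_norm_bounded hsumu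
    intro m
    apply hbound m g
    rw [Metric.mem_ball, dist_zero_right]
    exact hgb
  have htailsum : HasSum (fun m : ℕ => cF (a:ℂ) (m+1) g) (tail g) := hcsum.hasSum
  -- combine
  have htotal := hgeo.add htailsum
  have hfun : (fun m : ℕ => (Real.exp (-μ * (m + 1)) : ℂ) * Yc (m + 1) g)
      = fun m : ℕ => (uC g - tC g)/uC g * (tC g/(a:ℂ))^(m+1) + cF (a:ℂ) (m+1) g :=
    funext hterm
  rw [hfun]
  have hval : (uC g - tC g)/uC g * ((tC g/(a:ℂ)) * (1 - tC g/(a:ℂ))⁻¹) + tail g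
      = (r : ℂ) / ((gc : ℂ) - g) + h g := by
    rw [geo_closed ha0 ha2 hg4 hta, hh_def]
    have hgccast : ((gc : ℝ) : ℂ) = ((a*(1-a) : ℝ) : ℂ) := by rw [hgc']
    rw [hgccast, hr_def]
    ring
  rw [← hval]
  exact htotal
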